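/- arXiv:1712.02397 — 2 statements merged into one kernel-verified Lean document; each statement's English description precedes it below -/
import Mathlib

section
/- Let α := (55/(9√π)) · Γ(5/6)/Γ(1/3) and let u' > 0, k_e > 0. Define the von Kármán spectrum (without viscous cutoff) E(k) = α (u'²/k_e) (k/k_e)⁴ [1 + (k/k_e)²]^{−17/6} for k > 0. Then ∫_0^∞ E(k) dk = (3/2) u'². That is, the constant α normalizes the total turbulent kinetic energy of the spectrum to k_t = (3/2) u'². -/
open Real MeasureTheory

open Set in

lemma beta_Ioo {u v : ℝ} (hu : 0 < u) (hv : 0 < v) :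
    ∫ t in Set.Ioo (0:ℝ) 1, t ^ (u-1) * (1-t) ^ (v-1) =
      Real.Gamma u * Real.Gamma v / Real.Gamma (u+v) := by
  have hB : Complex.betaIntegral u v =
      ((∫ t in Set.Ioo (0:ℝ) 1, t ^ (u-1) * (1-t) ^ (v-1) : ℝ) : ℂ) := by
    rw [Complex.betaIntegral, intervalIntegral.integral_of_le zero_le_one,
      MeasureTheory.integral_Ioc_eq_integral_Ioo]
    rw [show (∫ t in Set.Ioo (0:ℝ) 1, (t:ℂ) ^ ((u:ℂ)-1) * (1-(t:ℂ)) ^ ((v:ℂ)-1))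
        = ∫ t in Set.Ioo (0:ℝ) 1, ((t ^ (u-1) * (1-t) ^ (v-1) : ℝ) : ℂ) from
      setIntegral_congr_fun measurableSet_Ioo fun t ht => by
        obtain ⟨h0, h1⟩ := ht
        rw [show ((u:ℂ)-1) = ((u-1:ℝ):ℂ) by push_cast; ring,
          show ((v:ℂ)-1) = ((v-1:ℝ):ℂ) by push_cast; ring,
          show (1-(t:ℂ)) = ((1-t:ℝ):ℂ) by push_cast; ring,
          Complex.ofReal_mul, ← Complex.ofReal_cpow h0.le,
          ← Complex.ofReal_cpow (by linarith : (0:ℝ) ≤ 1 - t)]]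
    exact integral_ofReal
  have h := Complex.Gamma_mul_Gamma_eq_betaIntegral
    (s := (u:ℂ)) (t := (v:ℂ)) (by simpa using hu) (by simpa using hv)
  rw [hB] at h
  have huv : Real.Gamma (u+v) ≠ 0 := (Real.Gamma_pos_of_pos (by linarith)).ne'
  have : ((Real.Gamma u * Real.Gamma v : ℝ) : ℂ) =
      ((Real.Gamma (u+v) * ∫ t in Set.Ioo (0:ℝ) 1, t ^ (u-1) * (1-t) ^ (v-1) : ℝ) : ℂ) := by
    push_cast
    rw [← Complex.Gamma_ofReal, ← Complex.Gamma_ofReal, ← Complex.Gamma_ofReal]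
    push_cast
    exact h
  have h2 := Complex.ofReal_inj.mp this
  field_simp
  linarith [h2]

open Set in
lemma beta_Ioi {u v : ℝ} (hu : 0 < u) (hv : 0 < v) :
    ∫ s in Set.Ioi (0:ℝ), s ^ (u-1) * (1+s) ^ (-(u+v)) =
      Real.Gamma u * Real.Gamma v / Real.Gamma (u+v) := by
  set f : ℝ → ℝ := fun t => t / (1 - t) with hf
  set f' : ℝ → ℝ := fun t => ((1 - t) ^ 2)⁻¹ with hf'
  have hder : ∀ t ∈ Set.Ioo (0:ℝ) 1, HasDerivWithinAt f (f' t) (Set.Ioo (0:ℝ) 1) t := by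
    intro t ht
    have h1 : (1:ℝ) - t ≠ 0 := by rw [sub_ne_zero]; exact fun h => absurd ht.2 (by simp [← h])
    have := (hasDerivAt_id t).div ((hasDerivAt_const t (1:ℝ)).sub (hasDerivAt_id t)) h1
    refine (this.congr_deriv ?_).hasDerivWithinAt
    simp only [hf', Pi.sub_apply, id]
    field_simp
    ring
  have hinj : Set.InjOn f (Set.Ioo (0:ℝ) 1) := by
    intro a ha b hb hab
    have h1 : (1:ℝ) - a ≠ 0 := by have := ha.2; intro h; linarith [sub_eq_zero.mp h]
    have h2 : (1:ℝ) - b ≠ 0 := by have := hb.2; intro h; linarith [sub_eq_zero.mp h]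
    rw [hf, div_eq_div_iff h1 h2] at hab
    ring_nf at hab
    nlinarith [hab]
  have himg : f '' Set.Ioo (0:ℝ) 1 = Set.Ioi (0:ℝ) := by
    ext s
    constructor
    · rintro ⟨t, ⟨ht0, ht1⟩, rfl⟩
      exact div_pos ht0 (by linarith)
    · intro hs
      have hs' : (0:ℝ) < s := hs
      refine ⟨s / (1 + s), ⟨div_pos hs' (by linarith), by rw [div_lt_one (by linarith)]; linarith⟩, ?_⟩
      simp only [hf]
      rw [show 1 - s / (1+s) = 1 / (1+s) by field_simp; ring]
      field_simp
  have key := integral_image_eq_integral_abs_deriv_smul measurableSet_Ioo hder hinj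
    (fun s => s ^ (u-1) * (1+s) ^ (-(u+v)))
  rw [himg] at key
  rw [key, ← beta_Ioo hu hv]
  refine setIntegral_congr_fun measurableSet_Ioo fun t ht => ?_
  obtain ⟨h0, h1⟩ := ht
  have h1t : (0:ℝ) < 1 - t := by linarith
  have e1 : (1:ℝ) + t / (1 - t) = (1 - t)⁻¹ := by field_simp; ring
  have e2 : (t / (1 - t)) ^ (u - 1) = t ^ (u-1) / (1-t) ^ (u-1) :=
    Real.div_rpow h0.le h1t.le _
  have e3 : ((1 - t)⁻¹) ^ (-(u+v)) = (1-t) ^ (u+v) := by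
    rw [Real.inv_rpow h1t.le, Real.rpow_neg h1t.le, inv_inv]
  simp only [smul_eq_mul, hf, hf', e1, e2, e3]
  rw [abs_of_pos (by positivity)]
  rw [div_eq_mul_inv, ← Real.rpow_neg h1t.le,
    show ((1-t)^2 : ℝ) = (1-t)^(2:ℝ) by rw [← Real.rpow_natCast (1-t) 2]; norm_num,
    ← Real.rpow_neg h1t.le]
  rw [show (1-t:ℝ)^(-(2:ℝ)) * (t^(u-1) * (1-t)^(-(u-1)) * (1-t)^(u+v))
      = t^(u-1) * ((1-t)^(-(2:ℝ)) * (1-t)^(-(u-1)) * (1-t)^(u+v)) from by ring]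
  rw [← Real.rpow_add h1t, ← Real.rpow_add h1t,
    show -(2:ℝ) + -(u-1) + (u+v) = v-1 by ring]

theorem vonKarman_spectrum_total_kinetic_energy
    (α : ℝ) (hα : α = 55 / (9 * Real.sqrt π) * (Real.Gamma (5 / 6) / Real.Gamma (1 / 3)))
    (u' ke : ℝ) (hu' : 0 < u') (hke : 0 < ke)
    (E : ℝ → ℝ)
    (hE : ∀ k ∈ Set.Ioi (0 : ℝ),
      E k = α * (u' ^ 2 / ke) * (k / ke) ^ 4 * (1 + (k / ke) ^ 2) ^ (-(17 / 6) : ℝ)) :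
    ∫ k in Set.Ioi (0 : ℝ), E k = 3 / 2 * u' ^ 2 := by
  -- the base integral
  have hbase : ∫ s in Set.Ioi (0:ℝ), s ^ ((3:ℝ)/2) * (1+s) ^ (-(17/6) : ℝ)
      = Real.Gamma (5/2) * Real.Gamma (1/3) / Real.Gamma (17/6) := by
    have := beta_Ioi (u := 5/2) (v := 1/3) (by norm_num) (by norm_num)
    rw [show (5:ℝ)/2 - 1 = 3/2 by norm_num, show (5:ℝ)/2 + 1/3 = 17/6 by norm_num] at this
    exact this
  -- substitution s = x^2
  have hsq : ∫ x in Set.Ioi (0:ℝ), x ^ 4 * (1 + x ^ 2) ^ (-(17/6) : ℝ)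
      = (1/2) * (Real.Gamma (5/2) * Real.Gamma (1/3) / Real.Gamma (17/6)) := by
    have h := integral_comp_rpow_Ioi_of_pos
      (g := fun s => (1/2 : ℝ) * (s ^ ((3:ℝ)/2) * (1+s) ^ (-(17/6) : ℝ))) (p := 2) (by norm_num)
    rw [MeasureTheory.integral_const_mul] at h
    rw [← hbase]
    rw [← h]
    refine (setIntegral_congr_fun measurableSet_Ioi fun x hx => ?_).symm
    have hx0 : (0:ℝ) < x := hx
    have e1 : x ^ ((2:ℝ)) = x ^ (2:ℕ) := Real.rpow_natCast x 2
    have e2 : ((x ^ (2:ℕ) : ℝ)) ^ ((3:ℝ)/2) = x ^ (3:ℕ) := by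
      rw [← Real.rpow_natCast x 2, ← Real.rpow_mul hx0.le,
        show ((2:ℕ):ℝ) * (3/2) = ((3:ℕ):ℝ) by push_cast; norm_num, Real.rpow_natCast]
    simp only [smul_eq_mul, e1, e2, Real.rpow_one, show (2:ℝ)-1 = 1 by norm_num]
    ring
  calc ∫ k in Set.Ioi (0:ℝ), E k
      = ∫ k in Set.Ioi (0:ℝ),
          α * (u' ^ 2 / ke) * ((k / ke) ^ 4 * (1 + (k / ke) ^ 2) ^ (-(17 / 6) : ℝ)) := by
        refine setIntegral_congr_fun measurableSet_Ioi fun k hk => ?_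
        rw [hE k hk]; ring
    _ = α * (u' ^ 2 / ke) *
          ∫ k in Set.Ioi (0:ℝ), (k / ke) ^ 4 * (1 + (k / ke) ^ 2) ^ (-(17 / 6) : ℝ) :=
        MeasureTheory.integral_const_mul _ _
    _ = α * (u' ^ 2 / ke) * (ke * ((1/2) * (Real.Gamma (5/2) * Real.Gamma (1/3) / Real.Gamma (17/6)))) := by
        congr 1
        have h := integral_comp_mul_right_Ioi
          (g := fun x => x ^ 4 * (1 + x ^ 2) ^ (-(17/6) : ℝ)) 0 (b := ke⁻¹) (inv_pos.mpr hke)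
        simp only [zero_mul, smul_eq_mul, inv_inv] at h
        have hrw : (∫ k in Set.Ioi (0:ℝ), (k / ke) ^ 4 * (1 + (k / ke) ^ 2) ^ (-(17 / 6) : ℝ))
            = ∫ k in Set.Ioi (0:ℝ), (k * ke⁻¹) ^ 4 * (1 + (k * ke⁻¹) ^ 2) ^ (-(17 / 6) : ℝ) := by
          refine setIntegral_congr_fun measurableSet_Ioi fun k _ => ?_
          rw [div_eq_mul_inv]
        rw [hrw, h, hsq]
    _ = 3 / 2 * u' ^ 2 := by
        have hΓ52 : Real.Gamma (5/2) = 3/4 * Real.sqrt π := by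
          rw [show (5:ℝ)/2 = 3/2 + 1 by norm_num, Real.Gamma_add_one (by norm_num),
            show (3:ℝ)/2 = 1/2 + 1 by norm_num, Real.Gamma_add_one (by norm_num),
            Real.Gamma_one_half_eq]
          ring
        have hΓ176 : Real.Gamma (17/6) = 55/36 * Real.Gamma (5/6) := by
          rw [show (17:ℝ)/6 = 11/6 + 1 by norm_num, Real.Gamma_add_one (by norm_num),
            show (11:ℝ)/6 = 5/6 + 1 by norm_num, Real.Gamma_add_one (by norm_num)]
          ring
        have hπ : (0:ℝ) < Real.sqrt π := Real.sqrt_pos.mpr Real.pi_pos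
        have h13 : (0:ℝ) < Real.Gamma (1/3) := Real.Gamma_pos_of_pos (by norm_num)
        have h56 : (0:ℝ) < Real.Gamma (5/6) := Real.Gamma_pos_of_pos (by norm_num)
        rw [hα, hΓ52, hΓ176]
        field_simp
        ring_nf
end

section
/- Let α := (55/(9√π)) · Γ(5/6)/Γ(1/3) and let u' > 0, k_e > 0. Define the von Kármán spectrum (without viscous cutoff) E(k) = α (u'²/k_e) (k/k_e)⁴ [1 + (k/k_e)²]^{−17/6} for k > 0. Then ∫_0^∞ E(k)/k dk = (2Γ(5/6)/(√π Γ(1/3))) · u'²/k_e. Consequently, the integral length scale L := (π/(2u'²)) ∫_0^∞ E(k)/k dk satisfies k_e · L = √π · Γ(5/6)/Γ(1/3), i.e. k_e = √π (Γ(5/6)/Γ(1/3)) / L as asserted in Eq. (24) of the paper. -/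
open Real MeasureTheory

theorem vonKarman_integral_length_scale
    (α : ℝ) (hα : α = 55 / (9 * Real.sqrt π) * (Real.Gamma (5 / 6) / Real.Gamma (1 / 3)))
    (u' ke : ℝ) (hu' : 0 < u') (hke : 0 < ke)
    (E : ℝ → ℝ)
    (hE : ∀ k ∈ Set.Ioi (0 : ℝ),
      E k = α * (u' ^ 2 / ke) * (k / ke) ^ 4 * (1 + (k / ke) ^ 2) ^ (-(17 / 6) : ℝ))
    (L : ℝ) (hL : L = π / (2 * u' ^ 2) * ∫ k in Set.Ioi (0 : ℝ), E k / k) :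
    (∫ k in Set.Ioi (0 : ℝ), E k / k
      = 2 * Real.Gamma (5 / 6) / (Real.sqrt π * Real.Gamma (1 / 3)) * (u' ^ 2 / ke)) ∧
    ke * L = Real.sqrt π * (Real.Gamma (5 / 6) / Real.Gamma (1 / 3)) := by
  have hπ : (0:ℝ) < Real.sqrt π := Real.sqrt_pos.mpr Real.pi_pos
  have hΓ1 : 0 < Real.Gamma (5/6) := Real.Gamma_pos_of_pos (by norm_num)
  have hΓ2 : 0 < Real.Gamma (1/3) := Real.Gamma_pos_of_pos (by norm_num)
  have hα0 : 0 < α := by rw [hα]; positivity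
  set C : ℝ := α * u' ^ 2 / ke with hC
  have hC0 : 0 < C := by positivity
  -- the integrand
  set g : ℝ → ℝ := fun k =>
    α * (u' ^ 2 / ke) * (k / ke) ^ 4 * (1 + (k / ke) ^ 2) ^ (-(17 / 6) : ℝ) / k with hg
  -- the antiderivative
  set F : ℝ → ℝ := fun x =>
    -(3/5) * C * (1 + (x / ke) ^ 2) ^ (-(5/6) : ℝ)
      + (3/11) * C * (1 + (x / ke) ^ 2) ^ (-(11/6) : ℝ) with hF
  have hbase : ∀ x : ℝ, (0:ℝ) < 1 + (x / ke) ^ 2 := by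
    intro x; positivity
  have hFcont : Continuous F := by
    apply Continuous.add
    · exact (continuous_const.mul ((continuous_const.add
        ((continuous_id.div_const ke).pow 2)).rpow_const
        (fun x => Or.inl (hbase x).ne')))
    · exact (continuous_const.mul ((continuous_const.add
        ((continuous_id.div_const ke).pow 2)).rpow_const
        (fun x => Or.inl (hbase x).ne')))
  have hFderiv : ∀ x ∈ Set.Ioi (0:ℝ), HasDerivAt F (g x) x := by
    intro x hx
    have hx0 : (0:ℝ) < x := hx
    set y : ℝ := 1 + (x / ke) ^ 2 with hy
    have hy0 : (0:ℝ) < y := hbase x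
    have hyd : HasDerivAt (fun t : ℝ => 1 + (t / ke) ^ 2) (2 * x / ke ^ 2) x := by
      have h1 : HasDerivAt (fun t : ℝ => t / ke) (1 / ke) x := (hasDerivAt_id x).div_const ke
      have h2 := (h1.pow 2).const_add 1
      refine h2.congr_deriv ?_
      ring
    have hd1 : HasDerivAt (fun t : ℝ => (1 + (t / ke) ^ 2) ^ (-(5/6) : ℝ))
        (-(5/6) * y ^ ((-(5/6) : ℝ) - 1) * (2 * x / ke ^ 2)) x := by
      exact (Real.hasDerivAt_rpow_const (p := (-(5/6) : ℝ)) (Or.inl hy0.ne')).comp x hyd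
    have hd2 : HasDerivAt (fun t : ℝ => (1 + (t / ke) ^ 2) ^ (-(11/6) : ℝ))
        (-(11/6) * y ^ ((-(11/6) : ℝ) - 1) * (2 * x / ke ^ 2)) x := by
      exact (Real.hasDerivAt_rpow_const (p := (-(11/6) : ℝ)) (Or.inl hy0.ne')).comp x hyd
    have hD := ((hd1.const_mul (-(3/5) * C)).add (hd2.const_mul ((3:ℝ)/11 * C)))
    refine hD.congr_deriv ?_
    -- algebraic identity
    have e1 : ((-(5/6) : ℝ) - 1) = (-(11/6) : ℝ) := by norm_num
    have e2 : ((-(11/6) : ℝ) - 1) = (-(17/6) : ℝ) := by norm_num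
    rw [e1, e2]
    have r1 : y ^ (-(11/6) : ℝ) = y * y ^ (-(17/6) : ℝ) := by
      rw [show (-(11/6) : ℝ) = 1 + -(17/6) by norm_num, Real.rpow_add hy0, Real.rpow_one]
    rw [r1, hy]
    simp only [hg]
    generalize (1 + (x / ke) ^ 2) ^ (-(17/6) : ℝ) = p
    have hke' : ke ≠ 0 := hke.ne'
    rw [hC]
    field_simp
    ring
  have hgpos : ∀ x ∈ Set.Ioi (0:ℝ), 0 ≤ g x := by
    intro x hx
    have hx0 : (0:ℝ) < x := hx
    have : (0:ℝ) < (1 + (x / ke) ^ 2) ^ (-(17 / 6) : ℝ) :=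
      Real.rpow_pos_of_pos (hbase x) _
    have h4 : (0:ℝ) ≤ (x / ke) ^ 4 := by positivity
    positivity
  have hFtendsto : Filter.Tendsto F Filter.atTop (nhds 0) := by
    have hyt : Filter.Tendsto (fun x : ℝ => 1 + (x / ke) ^ 2) Filter.atTop Filter.atTop := by
      apply Filter.tendsto_atTop_add_const_left
      exact (Filter.tendsto_pow_atTop two_ne_zero).comp (Filter.tendsto_id.atTop_div_const hke)
    have t1 : Filter.Tendsto (fun x : ℝ => (1 + (x / ke) ^ 2) ^ (-(5/6) : ℝ))
        Filter.atTop (nhds 0) :=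
      (tendsto_rpow_neg_atTop (by norm_num : (0:ℝ) < 5/6)).comp hyt
    have t2 : Filter.Tendsto (fun x : ℝ => (1 + (x / ke) ^ 2) ^ (-(11/6) : ℝ))
        Filter.atTop (nhds 0) :=
      (tendsto_rpow_neg_atTop (by norm_num : (0:ℝ) < 11/6)).comp hyt
    have h := ((t1.const_mul (-(3/5) * C)).add (t2.const_mul ((3:ℝ)/11 * C)))
    have h00 : (-(3/5) * C * 0 + (3:ℝ)/11 * C * 0 : ℝ) = 0 := by ring
    rw [hF]
    exact h00 ▸ h
  have hint : (∫ k in Set.Ioi (0:ℝ), g k) = 0 - F 0 :=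
    integral_Ioi_of_hasDerivAt_of_nonneg (hFcont.continuousWithinAt) hFderiv hgpos hFtendsto
  have hF0 : F 0 = -(18/55) * C := by
    rw [hF]
    norm_num
    ring
  have hEq : (∫ k in Set.Ioi (0:ℝ), E k / k) = ∫ k in Set.Ioi (0:ℝ), g k := by
    apply setIntegral_congr_fun measurableSet_Ioi
    intro k hk
    show E k / k = g k
    rw [hE k hk]
  have hval : (∫ k in Set.Ioi (0:ℝ), E k / k) = (18/55) * C := by
    rw [hEq, hint, hF0]; ring
  have hmain : (∫ k in Set.Ioi (0 : ℝ), E k / k)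
      = 2 * Real.Gamma (5 / 6) / (Real.sqrt π * Real.Gamma (1 / 3)) * (u' ^ 2 / ke) := by
    rw [hval, hC, hα]
    field_simp
    ring
  refine ⟨hmain, ?_⟩
  rw [hL, hmain]
  obtain ⟨s, hs⟩ : ∃ s, Real.sqrt π = s := ⟨_, rfl⟩
  have hs0 : 0 < s := hs ▸ hπ
  have hπs : π = s * s := by rw [← hs]; exact (Real.mul_self_sqrt Real.pi_pos.le).symm
  rw [hs, hπs]
  field_simp
end
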